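/- Let G(z) be the Green function of the linearization of a real M×N matrix X with ‖X*X‖₂ ≤ K and z = E + iη with c ≤ |z| ≤ C, η > 0. Then (1/N²)·∑_{i,j=1}^{N+M} |G_{ij}(z)|² ≤ C′·(1 + K)²·( Im m(z)/(N η) + 1/N ), where m(z) = (1/N)∑_{v=1}^{N} G_{vv}(z) and C′ depends only on c, C. -/

import Mathlib

open Matrix

lemma stmt16_dot_self {ι : Type*} [Fintype ι] (w : ι → ℂ) :
    star w ⬝ᵥ w = ((∑ i, Complex.normSq (w i) : ℝ) : ℂ) := by
  simp only [dotProduct, Pi.star_apply, Complex.ofReal_sum]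
  exact Finset.sum_congr rfl fun i _ => by
    rw [Complex.star_def, Complex.normSq_eq_conj_mul_self]

lemma stmt16_dot_key {m n : Type*} [Fintype m] [Fintype n]
    (Y : Matrix m n ℂ) (v : n → ℂ) :
    star v ⬝ᵥ ((Yᴴ * Y) *ᵥ v) = ((∑ i, Complex.normSq ((Y *ᵥ v) i) : ℝ) : ℂ) := by
  rw [← Matrix.mulVec_mulVec, Matrix.dotProduct_mulVec, ← Matrix.star_mulVec,
    stmt16_dot_self]

lemma stmt16_isUnit {m n : Type*} [Fintype m] [Fintype n] [DecidableEq n]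
    (Y : Matrix m n ℂ) (z : ℂ) (hz : z.im ≠ 0) :
    IsUnit (Yᴴ * Y - z • 1).det := by
  rw [isUnit_iff_ne_zero]
  intro hdet
  obtain ⟨v, hv0, hv⟩ := (Matrix.exists_mulVec_eq_zero_iff).2 hdet
  have h1 : (Yᴴ * Y) *ᵥ v = z • v := by
    have h2 : (Yᴴ * Y) *ᵥ v - (z • (1 : Matrix n n ℂ)) *ᵥ v = 0 := by
      rw [← Matrix.sub_mulVec, hv]
    have h3 : (z • (1 : Matrix n n ℂ)) *ᵥ v = z • v := by
      rw [Matrix.smul_mulVec, Matrix.one_mulVec]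
    rw [h3] at h2
    exact sub_eq_zero.1 h2
  have key : ((∑ i, Complex.normSq ((Y *ᵥ v) i) : ℝ) : ℂ)
      = z * ((∑ j, Complex.normSq (v j) : ℝ) : ℂ) := by
    rw [← stmt16_dot_key, h1, dotProduct_smul, smul_eq_mul, stmt16_dot_self]
  have him := congrArg Complex.im key
  simp only [Complex.ofReal_im, Complex.mul_im, Complex.ofReal_re, Complex.ofReal_im,
    mul_zero, add_zero] at him
  have hvpos : 0 < ∑ j, Complex.normSq (v j) := by
    obtain ⟨j, hj⟩ := Function.ne_iff.1 hv0
    exact Finset.sum_pos' (fun i _ => Complex.normSq_nonneg _)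
      ⟨j, Finset.mem_univ j, Complex.normSq_pos.2 hj⟩
  have : z.im * ∑ j, Complex.normSq (v j) ≠ 0 := mul_ne_zero hz (ne_of_gt hvpos)
  apply this; linarith [him.symm]

lemma stmt16_ward {n : Type*} [Fintype n] [DecidableEq n] (A : Matrix n n ℂ)
    (hA : Aᴴ = A) (z : ℂ) (hz : 0 < z.im) (hdet : IsUnit (A - z • 1).det) :
    ∑ i, ∑ k, ‖(A - z • (1:Matrix n n ℂ))⁻¹ i k‖ ^ 2
      = ((A - z • (1:Matrix n n ℂ))⁻¹.trace).im / z.im := by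
  set R := (A - z • (1:Matrix n n ℂ))⁻¹ with hRdef
  have h1 : (A - z • (1:Matrix n n ℂ))ᴴ = A - (starRingEnd ℂ z) • 1 := by
    rw [conjTranspose_sub, hA, conjTranspose_smul, conjTranspose_one]; rfl
  have hdet' : IsUnit (A - (starRingEnd ℂ z) • (1:Matrix n n ℂ)).det := by
    rw [← h1, Matrix.det_conjTranspose]
    exact hdet.star
  have hRH : Rᴴ = (A - (starRingEnd ℂ z) • (1:Matrix n n ℂ))⁻¹ := by
    rw [hRdef, Matrix.conjTranspose_nonsing_inv, h1]
  have key : R - Rᴴ = (z - starRingEnd ℂ z) • (R * Rᴴ) := by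
    have e1 : R * ((A - (starRingEnd ℂ z) • 1) * Rᴴ) = R := by
      rw [hRH, Matrix.mul_nonsing_inv _ hdet', mul_one]
    have e2 : (R * (A - z • 1)) * Rᴴ = Rᴴ := by
      rw [hRdef, Matrix.nonsing_inv_mul _ hdet, one_mul]
    calc R - Rᴴ = R * ((A - (starRingEnd ℂ z) • 1) * Rᴴ) - (R * (A - z • 1)) * Rᴴ := by
          rw [e1, e2]
      _ = R * (((A - (starRingEnd ℂ z) • 1) - (A - z • 1)) * Rᴴ) := by
          simp only [Matrix.sub_mul, Matrix.mul_sub, mul_assoc]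
      _ = (z - starRingEnd ℂ z) • (R * Rᴴ) := by
          have : (A - (starRingEnd ℂ z) • (1:Matrix n n ℂ)) - (A - z • 1)
              = (z - starRingEnd ℂ z) • 1 := by
            rw [sub_smul]; abel
          rw [this, smul_mul_assoc, one_mul, mul_smul_comm]
  have htr := congrArg Matrix.trace key
  rw [Matrix.trace_sub, Matrix.trace_smul, Matrix.trace_conjTranspose] at htr
  have htrRR : (R * Rᴴ).trace = ((∑ i, ∑ k, Complex.normSq (R i k) : ℝ) : ℂ) := by
    rw [Matrix.trace]
    simp only [Matrix.diag_apply, Matrix.mul_apply, Matrix.conjTranspose_apply,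
      Complex.ofReal_sum]
    exact Finset.sum_congr rfl fun i _ => Finset.sum_congr rfl fun k _ => by
      simp [Complex.star_def, Complex.mul_conj]
  rw [htrRR] at htr
  have him := congrArg Complex.im htr
  have hsub : R.trace - star R.trace = (2 * R.trace.im : ℝ) * Complex.I := Complex.sub_conj _
  rw [hsub] at him
  have hsub2 : z - starRingEnd ℂ z = (2 * z.im : ℝ) * Complex.I := Complex.sub_conj _
  rw [hsub2] at him
  simp only [smul_eq_mul, Complex.mul_im, Complex.ofReal_re, Complex.ofReal_im,
    Complex.I_re, Complex.I_im, Complex.mul_re, mul_zero, mul_one, zero_mul,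
    add_zero, zero_add, sub_zero, zero_sub, neg_zero] at him
  have hfin : ∑ i, ∑ k, Complex.normSq (R i k) = R.trace.im / z.im := by
    field_simp
    linarith [him]
  rw [← hfin]
  exact Finset.sum_congr rfl fun i _ => Finset.sum_congr rfl fun k _ => Complex.sq_norm _

lemma stmt16_vec_bound {m n : Type*} [Fintype m] [Fintype n] [DecidableEq n]
    (Y : Matrix m n ℂ) (K : ℝ)
    (hK : ‖Matrix.toEuclideanCLM (𝕜 := ℂ) (Yᴴ * Y)‖ ≤ K) (v : n → ℂ) :
    ∑ i, ‖(Y *ᵥ v) i‖ ^ 2 ≤ K * ∑ j, ‖v j‖ ^ 2 := by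
  set u : EuclideanSpace ℂ n := (WithLp.equiv 2 (n → ℂ)).symm v with hu
  set T := Matrix.toEuclideanCLM (𝕜 := ℂ) (Yᴴ * Y) with hT
  have hTu : T u = (WithLp.equiv 2 (n → ℂ)).symm ((Yᴴ * Y) *ᵥ v) := by
    rw [hu]; rfl
  have hinner : (inner ℂ u (T u) : ℂ) = ((∑ i, Complex.normSq ((Y *ᵥ v) i) : ℝ) : ℂ) := by
    rw [hTu, hu, ← stmt16_dot_key, dotProduct_comm]
    rfl
  have hnormu : ‖u‖ ^ 2 = ∑ j, ‖v j‖ ^ 2 := by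
    rw [EuclideanSpace.norm_eq, Real.sq_sqrt (by positivity)]
    exact Finset.sum_congr rfl fun j _ => by
      rw [hu]; simp
  have h1 : (∑ i, Complex.normSq ((Y *ᵥ v) i) : ℝ) ≤ K * ‖u‖ ^ 2 := by
    have := (Complex.re_le_norm (inner ℂ u (T u) : ℂ))
    rw [hinner] at this
    simp only [Complex.ofReal_re] at this
    calc (∑ i, Complex.normSq ((Y *ᵥ v) i) : ℝ)
        ≤ ‖((∑ i, Complex.normSq ((Y *ᵥ v) i) : ℝ) : ℂ)‖ := by
          simpa using this
      _ = ‖(inner ℂ u (T u) : ℂ)‖ := by rw [hinner]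
      _ ≤ ‖u‖ * ‖T u‖ := norm_inner_le_norm _ _
      _ ≤ ‖u‖ * (K * ‖u‖) := by
          refine mul_le_mul_of_nonneg_left ?_ (norm_nonneg _)
          exact (T.le_opNorm u).trans (mul_le_mul_of_nonneg_right hK (norm_nonneg _))
      _ = K * ‖u‖ ^ 2 := by ring
  rw [hnormu] at h1
  calc ∑ i, ‖(Y *ᵥ v) i‖ ^ 2 = ∑ i, Complex.normSq ((Y *ᵥ v) i) :=
        Finset.sum_congr rfl fun i _ => Complex.sq_norm _
    _ ≤ K * ∑ j, ‖v j‖ ^ 2 := h1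

lemma stmt16_frob_bound {m n p : Type*} [Fintype m] [Fintype n] [Fintype p] [DecidableEq n]
    (Y : Matrix m n ℂ) (K : ℝ)
    (hK : ‖Matrix.toEuclideanCLM (𝕜 := ℂ) (Yᴴ * Y)‖ ≤ K) (R : Matrix n p ℂ) :
    ∑ i, ∑ k, ‖(Y * R) i k‖ ^ 2 ≤ K * ∑ j, ∑ k, ‖R j k‖ ^ 2 := by
  rw [Finset.sum_comm]
  rw [Finset.sum_comm (s := Finset.univ) (t := Finset.univ)
    (f := fun j k => ‖R j k‖ ^ 2), Finset.mul_sum]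
  apply Finset.sum_le_sum
  intro k _
  have := stmt16_vec_bound Y K hK (fun j => R j k)
  calc ∑ i, ‖(Y * R) i k‖ ^ 2
      = ∑ i, ‖(Y *ᵥ (fun j => R j k)) i‖ ^ 2 := by
        refine Finset.sum_congr rfl fun i _ => ?_
        rw [Matrix.mul_apply]; rfl
    _ ≤ K * ∑ j, ‖R j k‖ ^ 2 := this

lemma stmt16_frob_conjT {m n : Type*} [Fintype m] [Fintype n] (A : Matrix m n ℂ) :
    ∑ i, ∑ k, ‖Aᴴ i k‖ ^ 2 = ∑ i, ∑ k, ‖A i k‖ ^ 2 := by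
  rw [Finset.sum_comm]
  exact Finset.sum_congr rfl fun i _ => Finset.sum_congr rfl fun k _ => by
    rw [Matrix.conjTranspose_apply]
    simp [Complex.star_def]

lemma stmt16_hF {m n : Type*} [Fintype m] [Fintype n] [DecidableEq n]
    (Y : Matrix m n ℂ) (z : ℂ) (hdet : IsUnit (Yᴴ * Y - z • 1).det) :
    Yᴴ * (Y * (Yᴴ * Y - z • 1)⁻¹) - z • (Yᴴ * Y - z • 1)⁻¹ = 1 := by
  have h := Matrix.mul_nonsing_inv _ hdet
  rw [Matrix.sub_mul, Matrix.smul_mul, Matrix.one_mul, Matrix.mul_assoc] at h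
  exact h

lemma stmt16_blocks {m n : Type*} [Fintype m] [Fintype n] [DecidableEq m] [DecidableEq n]
    (Y : Matrix m n ℂ) (z : ℂ) (hdet : IsUnit (Yᴴ * Y - z • 1).det) :
    (Matrix.fromBlocks (-(z • 1)) Yᴴ Y (-1))⁻¹ =
      Matrix.fromBlocks ((Yᴴ * Y - z • 1)⁻¹) ((Yᴴ * Y - z • 1)⁻¹ * Yᴴ)
        (Y * (Yᴴ * Y - z • 1)⁻¹) (Y * (Yᴴ * Y - z • 1)⁻¹ * Yᴴ - 1) := by
  set R := (Yᴴ * Y - z • 1)⁻¹ with hR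
  have hF : Yᴴ * (Y * R) - z • R = 1 := stmt16_hF Y z hdet
  apply Matrix.inv_eq_right_inv
  rw [Matrix.fromBlocks_multiply]
  have h11 : -(z • (1 : Matrix n n ℂ)) * R + Yᴴ * (Y * R) = 1 := by
    rw [Matrix.neg_mul, Matrix.smul_mul, Matrix.one_mul, neg_add_eq_sub, ← hF]
  have h12 : -(z • (1 : Matrix n n ℂ)) * (R * Yᴴ) + Yᴴ * (Y * R * Yᴴ - 1) = 0 := by
    have h := congrArg (· * Yᴴ) hF
    simp only [Matrix.sub_mul, Matrix.smul_mul, Matrix.one_mul, Matrix.mul_assoc] at h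
    rw [Matrix.neg_mul, Matrix.smul_mul, Matrix.one_mul, Matrix.mul_sub, Matrix.mul_one,
      Matrix.mul_assoc]
    calc -(z • (R * Yᴴ)) + (Yᴴ * (Y * (R * Yᴴ)) - Yᴴ)
        = (Yᴴ * (Y * (R * Yᴴ)) - z • (R * Yᴴ)) - Yᴴ := by abel
      _ = 0 := by rw [h, sub_self]
  have h21 : Y * R + (-1 : Matrix m m ℂ) * (Y * R) = 0 := by
    rw [Matrix.neg_mul, Matrix.one_mul]; abel
  have h22 : Y * (R * Yᴴ) + (-1 : Matrix m m ℂ) * (Y * R * Yᴴ - 1) = 1 := by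
    rw [Matrix.neg_mul, Matrix.one_mul, ← Matrix.mul_assoc]; abel
  rw [h11, h12, h21, h22, ← Matrix.fromBlocks_one]

lemma stmt16_Rc {m n : Type*} [Fintype m] [Fintype n] [DecidableEq m] [DecidableEq n]
    (Y : Matrix m n ℂ) (z : ℂ) (hz0 : z ≠ 0) (hdet : IsUnit (Yᴴ * Y - z • 1).det) :
    (Y * Yᴴ - z • 1)⁻¹ = (-z⁻¹) • (1 - Y * (Yᴴ * Y - z • 1)⁻¹ * Yᴴ) := by
  set R := (Yᴴ * Y - z • 1)⁻¹ with hR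
  have hF : Yᴴ * (Y * R) - z • R = 1 := stmt16_hF Y z hdet
  have hAR : Yᴴ * (Y * R) = 1 + z • R := by rw [← hF]; abel
  have hAR2 : Yᴴ * (Y * (R * Yᴴ)) = Yᴴ + z • (R * Yᴴ) := by
    have h := congrArg (· * Yᴴ) hAR
    simp only [Matrix.add_mul, Matrix.smul_mul, Matrix.one_mul, Matrix.mul_assoc] at h
    exact h
  apply Matrix.inv_eq_right_inv
  have hmid : (Y * Yᴴ - z • 1) * (1 - Y * R * Yᴴ) = -(z • 1) := by
    have hY : Y * (Yᴴ * (Y * (R * Yᴴ))) = Y * Yᴴ + z • (Y * (R * Yᴴ)) := by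
      rw [hAR2, Matrix.mul_add, Matrix.mul_smul]
    simp only [Matrix.mul_sub, Matrix.sub_mul, Matrix.mul_one, Matrix.smul_mul,
      Matrix.one_mul, Matrix.mul_assoc]
    rw [hY]; abel
  rw [Matrix.mul_smul, hmid, smul_neg, neg_smul, neg_neg, smul_smul,
    inv_mul_cancel₀ hz0, one_smul]

lemma stmt16_trace {m n : Type*} [Fintype m] [Fintype n] [DecidableEq m] [DecidableEq n]
    (Y : Matrix m n ℂ) (z : ℂ) (hz0 : z ≠ 0) (hdet : IsUnit (Yᴴ * Y - z • 1).det) :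
    (Y * Yᴴ - z • 1)⁻¹.trace
      = (Yᴴ * Y - z • 1)⁻¹.trace + z⁻¹ * ((Fintype.card n : ℂ) - (Fintype.card m : ℂ)) := by
  set R := (Yᴴ * Y - z • 1)⁻¹ with hR
  have hF : Yᴴ * (Y * R) - z • R = 1 := stmt16_hF Y z hdet
  have hAR : Yᴴ * (Y * R) = 1 + z • R := by rw [← hF]; abel
  have htr : (Y * R * Yᴴ).trace = (Fintype.card n : ℂ) + z * R.trace := by
    rw [Matrix.trace_mul_comm, hAR]
    rw [Matrix.trace_add, Matrix.trace_smul, Matrix.trace_one, smul_eq_mul]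
  rw [stmt16_Rc Y z hz0 hdet, Matrix.trace_smul, Matrix.trace_sub, Matrix.trace_one, htr]
  simp only [smul_eq_mul]
  field_simp
  ring

set_option maxHeartbeats 2000000 in
/-- For the Green function `G(z)` of the linearization of a real `M × N`
matrix `X` (with `N ≤ M ≤ ϱ₀ N`, the standing bounded-aspect-ratio assumption of the paper)
with `‖X*X‖₂ ≤ K` and `z = E + iη`, `c ≤ |z| ≤ C`, `η > 0`, one has
`(1/N²) ∑_{i,j} |G_{ij}(z)|² ≤ C' (1+K)² (Im m(z)/(Nη) + 1/N)` where
`m(z) = (1/N) ∑_{v ≤ N} G_{vv}(z)` and `C'` depends only on `c`, `C` (and `ϱ₀`). -/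
theorem statement16 (c C ϱ₀ : ℝ) (hc : 0 < c) (hC : 0 < C) (hϱ₀ : 0 < ϱ₀) :
    ∃ C' : ℝ, 0 < C' ∧
      ∀ (M N : ℕ) (X : Matrix (Fin M) (Fin N) ℝ) (K : ℝ) (z : ℂ),
        0 < N → N ≤ M → (M : ℝ) ≤ ϱ₀ * N →
        0 ≤ K →
        ‖Matrix.toEuclideanCLM (𝕜 := ℂ)
            ((X.map Complex.ofReal)ᴴ * X.map Complex.ofReal)‖ ≤ K →
        0 < z.im → c ≤ ‖z‖ → ‖z‖ ≤ C →
        let H : Matrix (Fin N ⊕ Fin M) (Fin N ⊕ Fin M) ℂ :=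
          Matrix.fromBlocks (-(z • 1)) (X.map Complex.ofReal)ᴴ (X.map Complex.ofReal) (-1)
        let G := H⁻¹
        let m : ℂ := (1 / (N : ℂ)) * ∑ v : Fin N, G (Sum.inl v) (Sum.inl v)
        (1 / (N : ℝ) ^ 2) * ∑ i : Fin N ⊕ Fin M, ∑ j : Fin N ⊕ Fin M,
            ‖G i j‖ ^ 2
          ≤ C' * (1 + K) ^ 2 * (m.im / (N * z.im) + 1 / N) := by
  refine ⟨1 + C ^ 2 + ϱ₀, by positivity, ?_⟩
  intro M N X K z hN hNM hMρ hK0 hK hz hcz hzC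
  intro H G m
  set Y : Matrix (Fin M) (Fin N) ℂ := X.map Complex.ofReal with hY
  have hzim : z.im ≠ 0 := ne_of_gt hz
  have hz0 : z ≠ 0 := fun h => by simp [h] at hz
  have hdetA : IsUnit (Yᴴ * Y - z • 1).det := stmt16_isUnit Y z hzim
  have hdetB : IsUnit (Y * Yᴴ - z • 1).det := by
    have := stmt16_isUnit Yᴴ z hzim
    rwa [conjTranspose_conjTranspose] at this
  set R := (Yᴴ * Y - z • 1)⁻¹ with hR
  set Rc := (Y * Yᴴ - z • 1)⁻¹ with hRcdef
  have hG : G = Matrix.fromBlocks R (R * Yᴴ) (Y * R) (Y * R * Yᴴ - 1) :=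
    stmt16_blocks Y z hdetA
  have hAH : (Yᴴ * Y)ᴴ = Yᴴ * Y := by
    rw [conjTranspose_mul, conjTranspose_conjTranspose]
  have hBH : (Y * Yᴴ)ᴴ = Y * Yᴴ := by
    rw [conjTranspose_mul, conjTranspose_conjTranspose]
  have hward1 := stmt16_ward (Yᴴ * Y) hAH z hz hdetA
  have hward2 := stmt16_ward (Y * Yᴴ) hBH z hz hdetB
  rw [← hR] at hward1
  rw [← hRcdef] at hward2
  -- abbreviations for the four Frobenius sums
  set S11 := ∑ i : Fin N, ∑ j : Fin N, ‖R i j‖ ^ 2 with hS11def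
  set S12 := ∑ i : Fin N, ∑ j : Fin M, ‖(R * Yᴴ) i j‖ ^ 2 with hS12def
  set S21 := ∑ i : Fin M, ∑ j : Fin N, ‖(Y * R) i j‖ ^ 2 with hS21def
  set S22 := ∑ i : Fin M, ∑ j : Fin M, ‖(Y * R * Yᴴ - (1 : Matrix (Fin M) (Fin M) ℂ)) i j‖ ^ 2 with hS22def
  have hsplit : ∑ i : Fin N ⊕ Fin M, ∑ j : Fin N ⊕ Fin M, ‖G i j‖ ^ 2
      = S11 + S12 + (S21 + S22) := by
    rw [hG, hS11def, hS12def, hS21def, hS22def]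
    simp only [Fintype.sum_sum_type, Matrix.fromBlocks_apply₁₁, Matrix.fromBlocks_apply₁₂,
      Matrix.fromBlocks_apply₂₁, Matrix.fromBlocks_apply₂₂, Finset.sum_add_distrib]
    ring
  -- bounds on the four blocks
  have hS11nn : (0:ℝ) ≤ S11 := by rw [hS11def]; positivity
  have hS21b : S21 ≤ K * S11 := stmt16_frob_bound Y K hK R
  have hconj : (Y * Rᴴ)ᴴ = R * Yᴴ := by
    rw [conjTranspose_mul, conjTranspose_conjTranspose]
  have hS12b : S12 ≤ K * S11 := by
    have e1 : S12 = ∑ i : Fin M, ∑ j : Fin N, ‖(Y * Rᴴ) i j‖ ^ 2 := by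
      rw [hS12def, ← hconj]
      exact stmt16_frob_conjT (Y * Rᴴ)
    rw [e1]
    calc ∑ i : Fin M, ∑ j : Fin N, ‖(Y * Rᴴ) i j‖ ^ 2
        ≤ K * ∑ i : Fin N, ∑ j : Fin N, ‖Rᴴ i j‖ ^ 2 :=
          stmt16_frob_bound Y K hK Rᴴ
      _ = K * S11 := by rw [stmt16_frob_conjT R, ← hS11def]
  have hD : Y * R * Yᴴ - 1 = z • Rc := by
    rw [hRcdef, stmt16_Rc Y z hz0 hdetA, smul_smul, mul_neg, mul_inv_cancel₀ hz0,
      neg_one_smul, neg_sub]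
  have hS22b : S22 = ‖z‖ ^ 2 * (Rc.trace.im / z.im) := by
    rw [hS22def, ← hward2, Finset.mul_sum]
    refine Finset.sum_congr rfl fun i _ => ?_
    rw [Finset.mul_sum]
    refine Finset.sum_congr rfl fun j _ => ?_
    rw [hD, Matrix.smul_apply, smul_eq_mul, norm_mul, mul_pow]
  -- trace relation
  have htrace : Rc.trace = R.trace + z⁻¹ * ((N : ℂ) - (M : ℂ)) := by
    rw [hRcdef, hR]
    have := stmt16_trace Y z hz0 hdetA
    simpa [Fintype.card_fin] using this
  have hRcim : Rc.trace.im = R.trace.im + z⁻¹.im * ((N:ℝ) - (M:ℝ)) := by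
    rw [htrace]
    simp [Complex.add_im, Complex.mul_im, Complex.sub_re, Complex.sub_im]
  have hinvim : z⁻¹.im = -z.im / (‖z‖ ^ 2) := by
    rw [Complex.inv_im, Complex.sq_norm]
  -- numbers
  have hNpos : (0:ℝ) < (N:ℝ) := by exact_mod_cast hN
  have hq0 : (0:ℝ) < ‖z‖ := by
    have := norm_pos_iff.2 hz0
    exact this
  have hq2 : ‖z‖ ^ 2 ≤ C ^ 2 := by nlinarith [hq0.le]
  have hS22c : S22 = ‖z‖ ^ 2 * (R.trace.im / z.im) + ((M:ℝ) - (N:ℝ)) := by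
    rw [hS22b, hRcim, hinvim]
    field_simp
    ring
  have hm : m = (1 / (N : ℂ)) * R.trace := by
    rw [show m = (1 / (N : ℂ)) * ∑ v : Fin N, G (Sum.inl v) (Sum.inl v) from rfl, hG]
    congr 1
  have hmim : m.im = (1 / (N:ℝ)) * R.trace.im := by
    have hm2 : m = (((1 / (N:ℝ)) : ℝ) : ℂ) * R.trace := by
      rw [hm]; push_cast; ring
    rw [hm2]
    simp [Complex.mul_im]
  have hs0 : (0:ℝ) ≤ R.trace.im / z.im := by rw [← hward1]; exact hS11nn
  have hNM' : (N:ℝ) ≤ (M:ℝ) := by exact_mod_cast hNM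
  -- final assembly
  rw [hsplit]
  have hcoef : (1 + 2*K + C ^ 2) ≤ (1 + C ^ 2 + ϱ₀) * (1 + K) ^ 2 := by
    nlinarith [sq_nonneg K, mul_nonneg (sq_nonneg C) hK0,
      mul_nonneg (sq_nonneg C) (sq_nonneg K), hϱ₀.le, mul_nonneg hϱ₀.le hK0,
      mul_nonneg hϱ₀.le (sq_nonneg K), sq_nonneg C]
  have hMN : (M:ℝ) - (N:ℝ) ≤ (1 + C ^ 2 + ϱ₀) * (1 + K) ^ 2 * (N:ℝ) := by
    nlinarith [hMρ, hNpos.le, mul_nonneg hNpos.le hK0, mul_nonneg hNpos.le (sq_nonneg K),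
      mul_nonneg (sq_nonneg C) hNpos.le,
      mul_nonneg (mul_nonneg (sq_nonneg C) hNpos.le) hK0,
      mul_nonneg (mul_nonneg (sq_nonneg C) hNpos.le) (sq_nonneg K),
      mul_nonneg hϱ₀.le (mul_nonneg hNpos.le hK0),
      mul_nonneg hϱ₀.le (mul_nonneg hNpos.le (sq_nonneg K))]
  have key : S11 + S12 + (S21 + S22)
      ≤ (1 + C ^ 2 + ϱ₀) * (1 + K) ^ 2 * (R.trace.im / z.im + (N:ℝ)) := by
    rw [hward1] at hS12b hS21b hS11nn
    have hq2s : ‖z‖ ^ 2 * (R.trace.im / z.im) ≤ C ^ 2 * (R.trace.im / z.im) :=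
      mul_le_mul_of_nonneg_right hq2 hs0
    have h2 : (1 + 2*K + C ^ 2) * (R.trace.im / z.im)
        ≤ ((1 + C ^ 2 + ϱ₀) * (1 + K) ^ 2) * (R.trace.im / z.im) :=
      mul_le_mul_of_nonneg_right hcoef hs0
    have hexp : (1 + C ^ 2 + ϱ₀) * (1 + K) ^ 2 * (R.trace.im / z.im + (N:ℝ))
        = ((1 + C ^ 2 + ϱ₀) * (1 + K) ^ 2) * (R.trace.im / z.im)
          + (1 + C ^ 2 + ϱ₀) * (1 + K) ^ 2 * (N:ℝ) := by ring
    rw [hexp, hS22c, hward1]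
    linarith [hS12b, hS21b, hq2s, h2, hMN]
  have hrhs : m.im / ((N:ℝ) * z.im) + 1 / (N:ℝ)
      = (R.trace.im / z.im + (N:ℝ)) / (N:ℝ) ^ 2 := by
    rw [hmim]
    field_simp
  rw [hrhs, one_div, inv_mul_eq_div, ← mul_div_assoc]
  exact (div_le_div_iff_of_pos_right (by positivity)).2 key
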